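/- arXiv:2605.13463 — 5 statements merged into one kernel-verified Lean document; each statement's English description precedes it below -/
import Mathlib

section
/- Let X be the Darboux–Halphen vector field on ℝ³ and let M(x) = 1/(4(x₂ − x₃)(x₁ − x₃)(x₁ − x₂)). Then at every point of the open set where (x₂ − x₃)(x₁ − x₃)(x₁ − x₂) ≠ 0 one has X(M) = 2(x₁ + x₂ + x₃)·M. -/
/-- Partial derivative ∂ᵢf at x of a function on ℝⁿ (modeled as `Fin n → ℝ`). -/
noncomputable def pd {n : ℕ} (f : (Fin n → ℝ) → ℝ) (i : Fin n) (x : Fin n → ℝ) : ℝ :=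
  fderiv ℝ f x (Pi.single i 1)

/-- Directional derivative X(f) = Σⱼ Xⱼ ∂ⱼf of f along the vector field X. -/
noncomputable def lieD {n : ℕ} (X : Fin n → (Fin n → ℝ) → ℝ) (f : (Fin n → ℝ) → ℝ)
    (x : Fin n → ℝ) : ℝ :=
  ∑ j, X j x * pd f j x

/-- The Darboux–Halphen vector field on ℝ³ (0-indexed coordinates). -/
noncomputable def DH : Fin 3 → (Fin 3 → ℝ) → ℝ :=
  ![fun x => x 1 * x 2 - x 0 * (x 1 + x 2),
    fun x => x 0 * x 2 - x 1 * (x 0 + x 2),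
    fun x => x 0 * x 1 - x 2 * (x 0 + x 1)]

/-- The multiplier M = 1/(4(x₂−x₃)(x₁−x₃)(x₁−x₂)) satisfies
X(M) = 2(x₁+x₂+x₃)·M wherever (x₂−x₃)(x₁−x₃)(x₁−x₂) ≠ 0. -/
theorem darboux_halphen_multiplier (x : Fin 3 → ℝ)
    (hx : (x 1 - x 2) * (x 0 - x 2) * (x 0 - x 1) ≠ 0) :
    lieD DH (fun y => 1 / (4 * (y 1 - y 2) * (y 0 - y 2) * (y 0 - y 1))) x =
      2 * (x 0 + x 1 + x 2) * (1 / (4 * (x 1 - x 2) * (x 0 - x 2) * (x 0 - x 1))) := by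
  have hp : ∀ i : Fin 3, HasFDerivAt (fun y : Fin 3 → ℝ => y i)
      (ContinuousLinearMap.proj i : (Fin 3 → ℝ) →L[ℝ] ℝ) x := fun i =>
    (ContinuousLinearMap.proj i : (Fin 3 → ℝ) →L[ℝ] ℝ).hasFDerivAt
  have hg := ((((hp 1).sub (hp 2)).const_mul (4:ℝ)).mul ((hp 0).sub (hp 2))).mul
    ((hp 0).sub (hp 1))
  have hgx : 4 * (x 1 - x 2) * (x 0 - x 2) * (x 0 - x 1) ≠ 0 := by
    rw [mul_assoc, mul_assoc]
    exact mul_ne_zero (by norm_num) (by rw [← mul_assoc]; exact hx)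
  have hM := (hasFDerivAt_inv hgx).comp x hg
  have hM2 : HasFDerivAt
      (fun y : Fin 3 → ℝ => (4 * (y 1 - y 2) * (y 0 - y 2) * (y 0 - y 1))⁻¹) _ x := hM
  simp only [lieD, pd, one_div, Fin.sum_univ_three, hM2.fderiv, DH]
  simp only [ContinuousLinearMap.coe_comp', Function.comp_apply,
    ContinuousLinearMap.smulRight_apply, ContinuousLinearMap.one_apply,
    ContinuousLinearMap.add_apply, ContinuousLinearMap.smul_apply,
    ContinuousLinearMap.sub_apply, ContinuousLinearMap.proj_apply,
    Matrix.cons_val_zero, Matrix.cons_val_one, Matrix.head_cons,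
    Matrix.cons_val_two, Matrix.tail_cons, smul_eq_mul,
    ContinuousLinearMap.toSpanSingleton_apply, Pi.sub_apply, Pi.mul_apply]
  rw [show (Pi.single 0 1 : Fin 3 → ℝ) 0 = 1 by simp,
    show (Pi.single 0 1 : Fin 3 → ℝ) 1 = 0 by simp [Pi.single_eq_of_ne],
    show (Pi.single 0 1 : Fin 3 → ℝ) 2 = 0 by simp [Pi.single_eq_of_ne],
    show (Pi.single 1 1 : Fin 3 → ℝ) 0 = 0 by simp [Pi.single_eq_of_ne],
    show (Pi.single 1 1 : Fin 3 → ℝ) 1 = 1 by simp,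
    show (Pi.single 1 1 : Fin 3 → ℝ) 2 = 0 by simp [Pi.single_eq_of_ne],
    show (Pi.single 2 1 : Fin 3 → ℝ) 0 = 0 by simp [Pi.single_eq_of_ne],
    show (Pi.single 2 1 : Fin 3 → ℝ) 1 = 0 by simp [Pi.single_eq_of_ne],
    show (Pi.single 2 1 : Fin 3 → ℝ) 2 = 1 by simp]
  have h1 : x 1 - x 2 ≠ 0 := fun h => hx (by simp [h])
  have h2 : x 0 - x 2 ≠ 0 := fun h => hx (by simp [h])
  have h3 : x 0 - x 1 ≠ 0 := fun h => hx (by simp [h])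
  field_simp
  ring
end

section
/- Let X be the Darboux–Halphen vector field on ℝ³. Then its divergence satisfies div X = ∂₁X₁ + ∂₂X₂ + ∂₃X₃ = −2(x₁ + x₂ + x₃) identically on ℝ³, and consequently, with M(x) = 1/(4(x₂ − x₃)(x₁ − x₃)(x₁ − x₂)), the Jacobi multiplier equation div(M·X) = ∂₁(MX₁) + ∂₂(MX₂) + ∂₃(MX₃) = 0 holds at every point where (x₂ − x₃)(x₁ − x₃)(x₁ − x₂) ≠ 0. -/
lemma pd_of {n : ℕ} {f : (Fin n → ℝ) → ℝ} {f' : (Fin n → ℝ) →L[ℝ] ℝ} {x : Fin n → ℝ}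
    (h : HasFDerivAt f f' x) (i : Fin n) : pd f i x = f' (Pi.single i 1) := by
  rw [pd, h.fderiv]

/-- Abbreviation for the derivative of the coordinate projections. -/
noncomputable def pj (x : Fin 3 → ℝ) (i : Fin 3) := hasFDerivAt_apply (𝕜 := ℝ) i x

set_option maxHeartbeats 2000000 in
/-- div X = −2(x₁+x₂+x₃) on ℝ³, and div(M·X) = 0 wherever
(x₂−x₃)(x₁−x₃)(x₁−x₂) ≠ 0, where M = 1/(4(x₂−x₃)(x₁−x₃)(x₁−x₂)). -/
theorem darboux_halphen_divergence_and_jacobi_multiplier :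
    (∀ x : Fin 3 → ℝ, ∑ j, pd (DH j) j x = -2 * (x 0 + x 1 + x 2)) ∧
    (∀ x : Fin 3 → ℝ, (x 1 - x 2) * (x 0 - x 2) * (x 0 - x 1) ≠ 0 →
      ∑ j, pd (fun y => (1 / (4 * (y 1 - y 2) * (y 0 - y 2) * (y 0 - y 1))) * DH j y) j x
        = 0) := by
  constructor
  · intro x
    have h0 := ((pj x 1).mul (pj x 2)).sub ((pj x 0).mul ((pj x 1).add (pj x 2)))
    have h1 := ((pj x 0).mul (pj x 2)).sub ((pj x 1).mul ((pj x 0).add (pj x 2)))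
    have h2 := ((pj x 0).mul (pj x 1)).sub ((pj x 2).mul ((pj x 0).add (pj x 1)))
    have hf0 := pd_of h0 (0 : Fin 3)
    have hf1 := pd_of h1 (1 : Fin 3)
    have hf2 := pd_of h2 (2 : Fin 3)
    rw [Fin.sum_univ_three]
    simp only [DH, Matrix.cons_val_zero, Matrix.cons_val_one, Matrix.head_cons,
      Matrix.cons_val_two, Matrix.tail_cons]
    erw [hf0, hf1, hf2]
    simp [Pi.single_apply]
    ring
  · intro x hx
    have hne : 4 * (x 1 - x 2) * (x 0 - x 2) * (x 0 - x 1) ≠ 0 := by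
      intro h0; exact hx (by linear_combination h0 / 4)
    have h0 := ((pj x 1).mul (pj x 2)).sub ((pj x 0).mul ((pj x 1).add (pj x 2)))
    have h1 := ((pj x 0).mul (pj x 2)).sub ((pj x 1).mul ((pj x 0).add (pj x 2)))
    have h2 := ((pj x 0).mul (pj x 1)).sub ((pj x 2).mul ((pj x 0).add (pj x 1)))
    have hD := (((hasFDerivAt_const (4:ℝ) x).mul ((pj x 1).sub (pj x 2))).mul
      ((pj x 0).sub (pj x 2))).mul ((pj x 0).sub (pj x 1))
    have hM := (hasFDerivAt_inv hne).comp x hD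
    have hf0 := pd_of (hM.mul h0) (0 : Fin 3)
    have hf1 := pd_of (hM.mul h1) (1 : Fin 3)
    have hf2 := pd_of (hM.mul h2) (2 : Fin 3)
    rw [Fin.sum_univ_three]
    simp only [one_div]
    simp only [DH, Matrix.cons_val_zero, Matrix.cons_val_one, Matrix.head_cons,
      Matrix.cons_val_two, Matrix.tail_cons]
    simp only [Function.comp_def] at hf0 hf1 hf2
    erw [hf0, hf1, hf2]
    simp [Pi.single_apply]
    have n1 : x 1 - x 2 ≠ 0 := by intro h; apply hx; rw [h]; ring
    have n2 : x 0 - x 2 ≠ 0 := by intro h; apply hx; rw [h]; ring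
    have n3 : x 0 - x 1 ≠ 0 := by intro h; apply hx; rw [h]; ring
    field_simp
    ring
end

section
/- Let x : I → ℝ³ be a solution of the Darboux–Halphen system ẋ₁ = x₂x₃ − x₁(x₂ + x₃), ẋ₂ = x₁x₃ − x₂(x₁ + x₃), ẋ₃ = x₁x₂ − x₃(x₁ + x₂) on an open interval I ⊆ ℝ. Then the function y(t) = −2(x₁(t) + x₂(t) + x₃(t)) is three times differentiable on I and satisfies the Chazy equation y''' = 2·y·y'' − 3·(y')² on I. -/
/-- Along any solution of the Darboux–Halphen system on an open interval I,
the function y = −2(x₁+x₂+x₃) is three times differentiable and satisfies the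
Chazy equation y''' = 2 y y'' − 3 (y')². -/
theorem chazy_from_darboux_halphen (I : Set ℝ) (hI : IsOpen I)
    (x1 x2 x3 : ℝ → ℝ)
    (h1 : ∀ t ∈ I, HasDerivAt x1 (x2 t * x3 t - x1 t * (x2 t + x3 t)) t)
    (h2 : ∀ t ∈ I, HasDerivAt x2 (x1 t * x3 t - x2 t * (x1 t + x3 t)) t)
    (h3 : ∀ t ∈ I, HasDerivAt x3 (x1 t * x2 t - x3 t * (x1 t + x2 t)) t) :
    ∀ t ∈ I,
      DifferentiableAt ℝ (fun s => -2 * (x1 s + x2 s + x3 s)) t ∧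
      DifferentiableAt ℝ (deriv fun s => -2 * (x1 s + x2 s + x3 s)) t ∧
      DifferentiableAt ℝ (deriv (deriv fun s => -2 * (x1 s + x2 s + x3 s))) t ∧
      deriv (deriv (deriv fun s => -2 * (x1 s + x2 s + x3 s))) t =
        2 * (-2 * (x1 t + x2 t + x3 t)) *
            deriv (deriv fun s => -2 * (x1 s + x2 s + x3 s)) t -
          3 * (deriv (fun s => -2 * (x1 s + x2 s + x3 s)) t) ^ 2 := by
  set y : ℝ → ℝ := fun s => -2 * (x1 s + x2 s + x3 s) with hy_def
  set g : ℝ → ℝ := fun s => 2 * (x1 s * x2 s + x2 s * x3 s + x3 s * x1 s) with hg_def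
  set p : ℝ → ℝ := fun s => -12 * (x1 s * x2 s * x3 s) with hp_def
  -- y has derivative g on I
  have hy : ∀ t ∈ I, HasDerivAt y (g t) t := by
    intro t ht
    have := (((h1 t ht).add (h2 t ht)).add (h3 t ht)).const_mul (-2 : ℝ)
    exact this.congr_deriv (by simp only [hg_def]; ring)
  -- g has derivative p on I
  have hg : ∀ t ∈ I, HasDerivAt g (p t) t := by
    intro t ht
    have := ((((h1 t ht).mul (h2 t ht)).add ((h2 t ht).mul (h3 t ht))).add
      ((h3 t ht).mul (h1 t ht))).const_mul (2 : ℝ)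
    exact this.congr_deriv (by simp only [hp_def]; ring)
  -- p has derivative 2*y*p - 3*g^2 on I
  have hp : ∀ t ∈ I, HasDerivAt p (2 * y t * p t - 3 * (g t) ^ 2) t := by
    intro t ht
    have h' := (((h1 t ht).mul (h2 t ht)).mul (h3 t ht)).const_mul (-12 : ℝ)
    exact h'.congr_deriv (by simp only [hy_def, hg_def, hp_def, Pi.mul_apply]; ring)
  intro t ht
  have ht' : I ∈ nhds t := hI.mem_nhds ht
  -- deriv y = g on I
  have e1 : ∀ s ∈ I, deriv y s = g s := fun s hs => (hy s hs).deriv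
  have e1' : deriv y =ᶠ[nhds t] g :=
    Filter.eventuallyEq_of_mem ht' (fun s hs => e1 s hs)
  -- deriv (deriv y) = p on I
  have e2 : ∀ s ∈ I, deriv (deriv y) s = p s := by
    intro s hs
    have e1s : deriv y =ᶠ[nhds s] g :=
      Filter.eventuallyEq_of_mem (hI.mem_nhds hs) (fun u hu => e1 u hu)
    rw [e1s.deriv_eq, (hg s hs).deriv]
  have e2' : deriv (deriv y) =ᶠ[nhds t] p :=
    Filter.eventuallyEq_of_mem ht' (fun s hs => e2 s hs)
  refine ⟨(hy t ht).differentiableAt, ?_, ?_, ?_⟩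
  · exact (hg t ht).differentiableAt.congr_of_eventuallyEq e1'
  · exact (hp t ht).differentiableAt.congr_of_eventuallyEq e2'
  · rw [e2'.deriv_eq, (hp t ht).deriv, e2 t ht, e1 t ht]
end

section
/- Let M(x) = 1/(4(x₂ − x₃)(x₁ − x₃)(x₁ − x₂)) on the open set U ⊂ ℝ³ where (x₂ − x₃)(x₁ − x₃)(x₁ − x₂) ≠ 0, and let H = 2(x₁∂₁ + x₂∂₂ + x₃∂₃) and F = ∂₁ + ∂₂ + ∂₃. Then div(M·F) = 0 and div(M·H) = 0 at every point of U; that is, M is a common multiplier for the vector fields F and H. -/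
set_option maxHeartbeats 1000000


/-- With M = 1/(4(x₂−x₃)(x₁−x₃)(x₁−x₂)), F = ∂₁+∂₂+∂₃ and H = 2Σxⱼ∂ⱼ, we have
div(M·F) = 0 and div(M·H) = 0 on the set where (x₂−x₃)(x₁−x₃)(x₁−x₂) ≠ 0. -/
theorem common_multiplier_F_H (x : Fin 3 → ℝ)
    (hx : (x 1 - x 2) * (x 0 - x 2) * (x 0 - x 1) ≠ 0) :
    (∑ j : Fin 3,
      pd (fun y => (1 / (4 * (y 1 - y 2) * (y 0 - y 2) * (y 0 - y 1))) * 1) j x = 0) ∧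
    (∑ j : Fin 3,
      pd (fun y => (1 / (4 * (y 1 - y 2) * (y 0 - y 2) * (y 0 - y 1))) * (2 * y j)) j x
        = 0) := by
  have h0 : HasFDerivAt (fun y : Fin 3 → ℝ => y 0)
      (ContinuousLinearMap.proj (R := ℝ) (φ := fun _ : Fin 3 => ℝ) 0) x :=
    (ContinuousLinearMap.proj (R := ℝ) (φ := fun _ : Fin 3 => ℝ) 0).hasFDerivAt
  have h1 : HasFDerivAt (fun y : Fin 3 → ℝ => y 1)
      (ContinuousLinearMap.proj (R := ℝ) (φ := fun _ : Fin 3 => ℝ) 1) x :=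
    (ContinuousLinearMap.proj (R := ℝ) (φ := fun _ : Fin 3 => ℝ) 1).hasFDerivAt
  have h2 : HasFDerivAt (fun y : Fin 3 → ℝ => y 2)
      (ContinuousLinearMap.proj (R := ℝ) (φ := fun _ : Fin 3 => ℝ) 2) x :=
    (ContinuousLinearMap.proj (R := ℝ) (φ := fun _ : Fin 3 => ℝ) 2).hasFDerivAt
  have hD := (((h1.sub h2).const_mul (4:ℝ)).mul (h0.sub h2)).mul (h0.sub h1)
  have hne : 4 * (x 1 - x 2) * (x 0 - x 2) * (x 0 - x 1) ≠ 0 := by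
    intro h; apply hx; nlinarith [h]
  have hM : HasFDerivAt (fun y : Fin 3 → ℝ => (4 * (y 1 - y 2) * (y 0 - y 2) * (y 0 - y 1))⁻¹) _ x :=
    (hasFDerivAt_inv hne).comp x hD
  have h12 : x 1 - x 2 ≠ 0 := by intro h; apply hx; rw [h]; ring
  have h02 : x 0 - x 2 ≠ 0 := by intro h; apply hx; rw [h]; ring
  have h01 : x 0 - x 1 ≠ 0 := by intro h; apply hx; rw [h]; ring
  constructor
  · have key : ∀ j : Fin 3,
        pd (fun y => (1 / (4 * (y 1 - y 2) * (y 0 - y 2) * (y 0 - y 1))) * 1) j x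
          = (fderiv ℝ (fun y : Fin 3 → ℝ =>
              (4 * (y 1 - y 2) * (y 0 - y 2) * (y 0 - y 1))⁻¹) x) (Pi.single j 1) := by
      intro j; unfold pd; simp only [one_div, mul_one]
    rw [Fin.sum_univ_three, key 0, key 1, key 2, hM.fderiv]
    simp only [ContinuousLinearMap.smul_apply, ContinuousLinearMap.add_apply,
      ContinuousLinearMap.comp_apply, ContinuousLinearMap.sub_apply,
      ContinuousLinearMap.proj_apply, ContinuousLinearMap.smulRight_apply,
      ContinuousLinearMap.one_apply, Pi.single_apply, smul_eq_mul,
      ContinuousLinearMap.toSpanSingleton_apply, Pi.sub_apply, Pi.mul_apply,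
      Fin.reduceEq, reduceIte, if_true, if_false]
    field_simp
    ring
  · have hg : ∀ j : Fin 3, HasFDerivAt (fun y : Fin 3 → ℝ => 2 * y j)
        ((2:ℝ) • ContinuousLinearMap.proj (R := ℝ) (φ := fun _ : Fin 3 => ℝ) j) x := by
      intro j
      exact ((ContinuousLinearMap.proj (R := ℝ) (φ := fun _ : Fin 3 => ℝ) j).hasFDerivAt).const_mul 2
    have key : ∀ j : Fin 3,
        pd (fun y => (1 / (4 * (y 1 - y 2) * (y 0 - y 2) * (y 0 - y 1))) * (2 * y j)) j x
          = (fderiv ℝ (fun y : Fin 3 → ℝ =>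
              (4 * (y 1 - y 2) * (y 0 - y 2) * (y 0 - y 1))⁻¹ * (2 * y j)) x) (Pi.single j 1) := by
      intro j; unfold pd; simp only [one_div]
    rw [Fin.sum_univ_three, key 0, key 1, key 2,
      (show HasFDerivAt (fun y : Fin 3 → ℝ => (4 * (y 1 - y 2) * (y 0 - y 2) * (y 0 - y 1))⁻¹ * (2 * y 0)) _ x from hM.mul (hg 0)).fderiv, (show HasFDerivAt (fun y : Fin 3 → ℝ => (4 * (y 1 - y 2) * (y 0 - y 2) * (y 0 - y 1))⁻¹ * (2 * y 1)) _ x from hM.mul (hg 1)).fderiv, (show HasFDerivAt (fun y : Fin 3 → ℝ => (4 * (y 1 - y 2) * (y 0 - y 2) * (y 0 - y 1))⁻¹ * (2 * y 2)) _ x from hM.mul (hg 2)).fderiv]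
    simp only [ContinuousLinearMap.smul_apply, ContinuousLinearMap.add_apply,
      ContinuousLinearMap.comp_apply, ContinuousLinearMap.sub_apply,
      ContinuousLinearMap.proj_apply, ContinuousLinearMap.smulRight_apply,
      ContinuousLinearMap.one_apply, Pi.single_apply, smul_eq_mul,
      ContinuousLinearMap.toSpanSingleton_apply, Pi.sub_apply, Pi.mul_apply,
      Fin.reduceEq, reduceIte, if_true, if_false]
    field_simp
    ring
end

section
/- In ℝ⁴, fix a = (a₁, a₂, a₃, a₄) with all aⱼ ≠ 0, and let E = Σⱼ eⱼ∂ⱼ with eⱼ(x) = −xⱼ²/aⱼ, H = 2Σⱼ xⱼ∂ⱼ, F = Σⱼ aⱼ∂ⱼ. Let M(x) = 1/(x₁²x₂²x₃²x₄²) on the open set V where x₁x₂x₃x₄ ≠ 0. Then div(M·E) = 0 at every point of V, whereas div(M·H) = −8M ≠ 0 at every point of V; in particular M is a multiplier for E but not for H. -/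
set_option maxHeartbeats 1000000

private lemma myHasFDerivAt_inv {D : (Fin 4 → ℝ) → ℝ} {L : (Fin 4 → ℝ) →L[ℝ] ℝ} {x : Fin 4 → ℝ}
    (hD : HasFDerivAt D L x) (h0 : D x ≠ 0) :
    HasFDerivAt (fun y => (D y)⁻¹) ((-(D x ^ 2)⁻¹) • L) x :=
  (hasDerivAt_inv h0).comp_hasFDerivAt x hD

/-- In ℝ⁴ with eⱼ = −xⱼ²/aⱼ (all aⱼ ≠ 0), H = 2Σxⱼ∂ⱼ and M = 1/(x₁²x₂²x₃²x₄²),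
on the set x₁x₂x₃x₄ ≠ 0 we have div(M·E) = 0 while div(M·H) = −8M ≠ 0;
so M is a Jacobi multiplier for E but not for H. -/
theorem multiplier_R4 (a : Fin 4 → ℝ) (ha : ∀ j, a j ≠ 0) (x : Fin 4 → ℝ)
    (hx : x 0 * x 1 * x 2 * x 3 ≠ 0) :
    (∑ j : Fin 4,
      pd (fun y => (1 / ((y 0) ^ 2 * (y 1) ^ 2 * (y 2) ^ 2 * (y 3) ^ 2)) *
        (-(y j) ^ 2 / a j)) j x = 0) ∧
    (∑ j : Fin 4,
      pd (fun y => (1 / ((y 0) ^ 2 * (y 1) ^ 2 * (y 2) ^ 2 * (y 3) ^ 2)) *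
        (2 * y j)) j x =
      -8 * (1 / ((x 0) ^ 2 * (x 1) ^ 2 * (x 2) ^ 2 * (x 3) ^ 2))) ∧
    -8 * (1 / ((x 0) ^ 2 * (x 1) ^ 2 * (x 2) ^ 2 * (x 3) ^ 2)) ≠ 0 := by
  have h0 : x 0 ≠ 0 := fun h => hx (by simp [h])
  have h1 : x 1 ≠ 0 := fun h => hx (by simp [h])
  have h2 : x 2 ≠ 0 := fun h => hx (by simp [h])
  have h3 : x 3 ≠ 0 := fun h => hx (by simp [h])
  have hQ : (x 0) ^ 2 * (x 1) ^ 2 * (x 2) ^ 2 * (x 3) ^ 2 ≠ 0 :=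
    mul_ne_zero (mul_ne_zero (mul_ne_zero (pow_ne_zero 2 h0) (pow_ne_zero 2 h1))
      (pow_ne_zero 2 h2)) (pow_ne_zero 2 h3)
  have hp : ∀ i : Fin 4, HasFDerivAt (fun y : Fin 4 → ℝ => y i)
      (ContinuousLinearMap.proj (R := ℝ) (φ := fun _ : Fin 4 => ℝ) i) x := by
    intro i
    exact (ContinuousLinearMap.proj (R := ℝ) (φ := fun _ : Fin 4 => ℝ) i).hasFDerivAt
  have hsq : ∀ i : Fin 4, HasFDerivAt (fun y : Fin 4 → ℝ => (y i) ^ 2)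
      ((2 * x i) • ContinuousLinearMap.proj (R := ℝ) (φ := fun _ : Fin 4 => ℝ) i) x := by
    intro i
    have h := (hp i).mul (hp i)
    simpa only [Pi.mul_def, pow_two, two_mul, add_smul] using h
  have hQd := (((hsq 0).mul (hsq 1)).mul (hsq 2)).mul (hsq 3)
  have hM := myHasFDerivAt_inv hQd hQ
  simp only [one_div, div_eq_mul_inv, one_mul]
  refine ⟨?_, ?_, ?_⟩
  · rw [Fin.sum_univ_four]
    have key : ∀ j : Fin 4,
        pd (fun y => ((y 0) ^ 2 * (y 1) ^ 2 * (y 2) ^ 2 * (y 3) ^ 2)⁻¹ *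
          (-(y j) ^ 2 * (a j)⁻¹)) j x = 0 := by
      intro j
      have hj := hM.mul (((hsq j).neg).mul_const ((a j)⁻¹))
      simp only [Pi.mul_def, Pi.neg_apply] at hj
      rw [pd, hj.fderiv]
      clear hj hM hQd hsq hp
      fin_cases j <;>
        · simp [ContinuousLinearMap.add_apply, ContinuousLinearMap.smul_apply,
            ContinuousLinearMap.neg_apply, ContinuousLinearMap.proj_apply,
            Pi.single_apply, smul_eq_mul]
          field_simp [ha 0, ha 1, ha 2, ha 3]
          ring
    rw [key 0, key 1, key 2, key 3]; ring
  · rw [Fin.sum_univ_four]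
    have key : ∀ j : Fin 4,
        pd (fun y => ((y 0) ^ 2 * (y 1) ^ 2 * (y 2) ^ 2 * (y 3) ^ 2)⁻¹ *
          (2 * y j)) j x =
        -2 * ((x 0) ^ 2 * (x 1) ^ 2 * (x 2) ^ 2 * (x 3) ^ 2)⁻¹ := by
      intro j
      have hj := hM.mul ((hp j).const_mul 2)
      simp only [Pi.mul_def] at hj
      rw [pd, hj.fderiv]
      clear hj hM hQd hsq hp
      fin_cases j <;>
        · simp [ContinuousLinearMap.add_apply, ContinuousLinearMap.smul_apply,
            ContinuousLinearMap.neg_apply, ContinuousLinearMap.proj_apply,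
            Pi.single_apply, smul_eq_mul]
          field_simp [ha 0, ha 1, ha 2, ha 3]
          ring
    rw [key 0, key 1, key 2, key 3]
    field_simp
    ring
  · intro h
    apply hQ
    field_simp at h
    norm_num at h
end
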